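/- Let d ≥ 2, R ∈ ℕ with ∂̃D_R nonempty, c ∈ [1,∞), ε ∈ (0,1), p ∈ (1,∞] (convention 1/∞ = 0), and assume |∂D_R| ≤ c |∂̃D_R|. Let S, Z : ℝ^{∂D_R} → ℝ^{∂D_R} be linear operators such that for all u : ∂D_R → ℝ: ⦀Su⦀_{2p/(p−1), ∂D_R} ≤ c ε^{−(d−1)(p+1)/(2p)} ⦀u⦀_{1, ∂D_R} and ⦀Zu⦀_{1, ∂D_R} ≤ c ⦀u⦀_{1, ∂̃D_R} (the latter implies Zu = 0 whenever u vanishes on ∂̃D_R). Define S^* : ℝ^{∂̃D_R} → ℝ^{∂̃D_R} by (S^*h)(x) = Σ_{y∈∂̃D_R} h(y) (S Z 1_{{x}})(y). Then for all h : ∂̃D_R → ℝ: ⦀S^*h⦀_{∞, ∂̃D_R} ≤ c³ ε^{−(d−1)(p+1)/(2p)} ⦀h⦀_{2p/(p+1), ∂̃D_R}. -/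

import Mathlib

open MeasureTheory Filter
open scoped ENNReal Classical

noncomputable section

/-- Points of the lattice `ℤ^d`. -/
abbrev Zd (d : ℕ) := Fin d → ℤ

/-- The `i`-th standard unit vector of `ℤ^d`. -/
def unitVec {d : ℕ} (i : Fin d) : Zd d := fun j => if j = i then 1 else 0

/-- Environments: a positive conductance for every (unoriented nearest-neighbour) edge,
where the edge `{x, x + e i}` is encoded by the pair `(x, i)`. -/
abbrev Env (d : ℕ) := ((Fin d → ℤ) × Fin d) → {r : ℝ // 0 < r}

/-- The conductance of the edge `{x, x + e i}` in the environment `ω`, as a real number. -/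
def cval {d : ℕ} (ω : Env d) (x : Zd d) (i : Fin d) : ℝ := (ω (x, i)).1

/-- Nearest-neighbour adjacency on `ℤ^d`. -/
def Adj {d : ℕ} (x y : Zd d) : Prop :=
  ∃ i : Fin d, y = x + unitVec i ∨ x = y + unitVec i

/-- The conductance `ω_{xy}` between two nearest neighbours `x ∼ y` (and `0` otherwise). -/
def econd {d : ℕ} (ω : Env d) (x y : Zd d) : ℝ :=
  ∑ i : Fin d, ((if y = x + unitVec i then cval ω x i else 0)
    + (if x = y + unitVec i then cval ω y i else 0))

/-- Discrete gradient `(∇_i u)(x) = u(x+e_i) - u(x)`. -/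
def dGrad {d : ℕ} (i : Fin d) (f : Zd d → ℝ) (x : Zd d) : ℝ :=
  f (x + unitVec i) - f x

/-- Discrete backward gradient `(∇_i^* u)(x) = u(x-e_i) - u(x)`. -/
def dGradStar {d : ℕ} (i : Fin d) (f : Zd d → ℝ) (x : Zd d) : ℝ :=
  f (x - unitVec i) - f x

/-- Discrete divergence `(∇^* ⬝ F)(x) = ∑ i, (F_i(x-e_i) - F_i(x))`. -/
def divStar {d : ℕ} (F : Zd d → Fin d → ℝ) (x : Zd d) : ℝ :=
  ∑ i : Fin d, (F (x - unitVec i) i - F x i)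

/-- Discrete Laplacian `Δu = -∑ i, ∇_i^* ∇_i u`. -/
def lap {d : ℕ} (f : Zd d → ℝ) (x : Zd d) : ℝ :=
  - ∑ i : Fin d, dGradStar i (dGrad i f) x

/-- The open discrete box `D_R = {x : |x|_∞ < R}`. -/
def boxD (d R : ℕ) : Finset (Zd d) :=
  Fintype.piFinset fun _ => Finset.Ioo (-(R : ℤ)) (R : ℤ)

/-- The closed discrete box `D̄_R = {x : |x|_∞ ≤ R}`. -/
def boxC (d R : ℕ) : Finset (Zd d) :=
  Fintype.piFinset fun _ => Finset.Icc (-(R : ℤ)) (R : ℤ)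

/-- The discrete boundary `∂D_R = {x : |x|_∞ = R}`. -/
def bdry (d R : ℕ) : Finset (Zd d) := boxC d R \ boxD d R

/-- The reduced boundary `∂̃D_R` of points of `∂D_R` having a neighbour in `D_R`. -/
def tbdry (d R : ℕ) : Finset (Zd d) :=
  (bdry d R).filter fun x => ∃ y ∈ boxD d R, Adj x y

/-- The oriented edge set `E_R = {(x,y) : x ∼ y, |x+y|_∞ < 2R}`. -/
def ER (d R : ℕ) : Finset (Zd d × Zd d) :=
  ((boxC d R) ×ˢ (boxC d R)).filter fun e =>
    Adj e.1 e.2 ∧ ∀ i, |e.1 i + e.2 i| < 2 * (R : ℤ)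

/-- The normal edges `E_R^{nor} = {(x,y) : x ∈ D_R, y ∈ ∂D_R, x ∼ y}`. -/
def Enor (d R : ℕ) : Finset (Zd d × Zd d) :=
  ((boxD d R) ×ˢ (bdry d R)).filter fun e => Adj e.1 e.2

/-- The tangential edges `E_R^{tan} = {(x,y) : x, y ∈ ∂D_R, x ∼ y}`. -/
def Etan (d R : ℕ) : Finset (Zd d × Zd d) :=
  ((bdry d R) ×ˢ (bdry d R)).filter fun e => Adj e.1 e.2

/-- Normalized `ℓ^r` norm `⦀u⦀_{r,A}` on a finite set. -/
def avNorm {V : Type*} (r : ℝ) (A : Finset V) (u : V → ℝ) : ℝ :=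
  ((∑ x ∈ A, |u x| ^ r) / (A.card : ℝ)) ^ (1 / r)

/-- Sup norm `⦀u⦀_{∞,A}` on a finite set. -/
def supNorm {V : Type*} (A : Finset V) (u : V → ℝ) : ℝ :=
  ⨆ x ∈ A, |u x|

/-- Normalized `ℓ^r` norm for an extended exponent `r ∈ [1,∞]`. -/
def avNormE {V : Type*} (r : ℝ≥0∞) (A : Finset V) (u : V → ℝ) : ℝ :=
  if r = ∞ then supNorm A u else avNorm r.toReal A u

/-- The exponent `2p/(p-1)`, with the convention that it equals `2` for `p = ∞`. -/
def dualExp (p : ℝ≥0∞) : ℝ :=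
  if p = ∞ then 2 else 2 * p.toReal / (p.toReal - 1)

/-- The exponent `2p/(p+1)`, with the convention that it equals `2` for `p = ∞`. -/
def coExp (p : ℝ≥0∞) : ℝ :=
  if p = ∞ then 2 else 2 * p.toReal / (p.toReal + 1)

/-- Euclidean norm on `ℝ^d`. -/
def vecNorm {d : ℕ} (v : Fin d → ℝ) : ℝ := Real.sqrt (∑ i, v i ^ 2)

/-- The translation `τ_a` acting on environments. -/
def shiftEnv {d : ℕ} (a : Zd d) (ω : Env d) : Env d := fun e => ω (e.1 + a, e.2)

/-- Stationarity of a measure on environments. -/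
def Stationary {d : ℕ} (P : Measure (Env d)) : Prop :=
  ∀ a : Zd d, MeasurePreserving (shiftEnv a) P P

/-- Ergodicity of a measure on environments w.r.t. the translations. -/
def ErgodicEnv {d : ℕ} (P : Measure (Env d)) : Prop :=
  ∀ A : Set (Env d), MeasurableSet A → (∀ a : Zd d, shiftEnv a ⁻¹' A = A) →
    P A = 0 ∨ P A = 1

/-- Stationary (`Stat_P`) random fields. -/
def StatP {d : ℕ} {E : Type*} [MeasurableSpace E] (P : Measure (Env d))
    (f : Env d → Zd d → E) : Prop :=
  Measurable (Function.uncurry f) ∧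
    ∀ᵐ ω ∂P, ∀ x : Zd d, f ω x = f (shiftEnv x ω) 0

/-- The horizontal derivative `D_i` on functions of the environment. -/
def Dop {d : ℕ} (i : Fin d) (ζ : Env d → ℝ) : Env d → ℝ :=
  fun ω => ζ (shiftEnv (unitVec i) ω) - ζ ω

/-- The horizontal derivative `D_i^*` on functions of the environment. -/
def DopStar {d : ℕ} (i : Fin d) (ζ : Env d → ℝ) : Env d → ℝ :=
  fun ω => ζ (shiftEnv (-(unitVec i)) ω) - ζ ω

/-- The reflection of `ℤ^d` flipping the `j`-th coordinate. -/
def reflPt {d : ℕ} (j : Fin d) (x : Zd d) : Zd d := fun k => if k = j then -x k else x k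

/-- The reflection `ρ_j` acting on environments. -/
def reflEnv {d : ℕ} (j : Fin d) (ω : Env d) : Env d :=
  fun e => ω (if e.2 = j then reflPt j e.1 - unitVec j else reflPt j e.1, e.2)

/-- The dual smoothing operator `S^*` built from `S` and the modifying operator `Z`. -/
def Sstar (d R : ℕ) (S Z : (Zd d → ℝ) →ₗ[ℝ] (Zd d → ℝ)) (h : Zd d → ℝ) (x : Zd d) : ℝ :=
  ∑ y ∈ tbdry d R, h y * (S (Z (fun z => if z = x then (1 : ℝ) else 0))) y

/-- Lemma `d09`: under an `L^1 → L^{2p/(p-1)}` smoothing bound on `S`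
(with loss `ε^{-(d-1)(p+1)/(2p)}`) and an `L^1` bound on `Z`,
`⦀S^* h⦀_{∞, ∂̃D_R} ≤ c³ ε^{-(d-1)(p+1)/(2p)} ⦀h⦀_{2p/(p+1), ∂̃D_R}`.
Here `(p+1)/(2p) = 1/coExp p`. -/
theorem dual_smoothing_sup_bound
    (d : ℕ) (hd : 2 ≤ d) (R : ℕ) (hne : (tbdry d R).Nonempty)
    (c : ℝ) (hc : 1 ≤ c) (ε : ℝ) (hε : ε ∈ Set.Ioo (0 : ℝ) 1) (p : ℝ≥0∞) (hp : 1 < p)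
    (hcard : ((bdry d R).card : ℝ) ≤ c * ((tbdry d R).card : ℝ))
    (S Z : (Zd d → ℝ) →ₗ[ℝ] (Zd d → ℝ))
    (hS : ∀ u : Zd d → ℝ,
      avNorm (dualExp p) (bdry d R) (S u)
        ≤ c * ε ^ (-(((d : ℝ) - 1) * (1 / coExp p))) * avNorm 1 (bdry d R) u)
    (hZ : ∀ u : Zd d → ℝ,
      avNorm 1 (bdry d R) (Z u) ≤ c * avNorm 1 (tbdry d R) u) :
    ∀ h : Zd d → ℝ,
      supNorm (tbdry d R) (Sstar d R S Z h)
        ≤ c ^ 3 * ε ^ (-(((d : ℝ) - 1) * (1 / coExp p)))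
            * avNorm (coExp p) (tbdry d R) h := by
  obtain ⟨hε0, hε1⟩ := hε
  have hc0 : (0:ℝ) < c := lt_of_lt_of_le one_pos hc
  set T := tbdry d R with hTdef
  set B := bdry d R with hBdef
  set q := coExp p with hqdef
  set q' := dualExp p with hq'def
  set γ := ε ^ (-(((d : ℝ) - 1) * (1 / q))) with hγdef
  have hγ : 0 < γ := Real.rpow_pos_of_pos hε0 _
  have hconj : q.HolderConjugate q' := by
    rcases eq_or_ne p ∞ with hpt | hpt
    · rw [hqdef, hq'def, coExp, dualExp, if_pos hpt, if_pos hpt]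
      rw [Real.holderConjugate_iff]
      constructor <;> norm_num
    · have ht : 1 < p.toReal := by
        have := (ENNReal.toReal_lt_toReal ENNReal.one_ne_top hpt).mpr hp
        simpa using this
      rw [hqdef, hq'def, coExp, dualExp, if_neg hpt, if_neg hpt]
      set t := p.toReal
      have h1 : (0:ℝ) < t - 1 := by linarith
      have h2 : (0:ℝ) < t + 1 := by linarith
      have h0 : (0:ℝ) < t := by linarith
      rw [Real.holderConjugate_iff]
      constructor
      · rw [lt_div_iff₀ h2]; linarith
      · field_simp
        ring
  have hq0 : 0 < q := hconj.pos
  have hq'0 : 0 < q' := hconj.symm.pos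
  have hq'1 : 1 < q' := hconj.symm.lt
  have hTB : T ⊆ B := Finset.filter_subset _ _
  have hT0 : (0:ℝ) < (T.card : ℝ) := by exact_mod_cast Finset.card_pos.mpr hne
  have hB0 : (0:ℝ) < (B.card : ℝ) :=
    lt_of_lt_of_le hT0 (by exact_mod_cast Finset.card_le_card hTB)
  set A := ((T.card : ℝ)) with hAdef
  set Bc := ((B.card : ℝ)) with hBcdef
  intro h
  set N := avNorm q T h with hNdef
  have hN0 : 0 ≤ N := by
    rw [hNdef, avNorm]
    exact Real.rpow_nonneg (div_nonneg (Finset.sum_nonneg fun _ _ =>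
      Real.rpow_nonneg (abs_nonneg _) _) hT0.le) _
  have hRHS : (0:ℝ) ≤ c ^ 3 * γ * N :=
    mul_nonneg (mul_nonneg (pow_nonneg hc0.le 3) hγ.le) hN0
  have key : ∀ x ∈ T, |Sstar d R S Z h x| ≤ c ^ 3 * γ * N := by
    intro x hx
    set u : Zd d → ℝ := fun z => if z = x then (1:ℝ) else 0 with hudef
    set g : Zd d → ℝ := S (Z u) with hgdef
    -- value of avNorm 1 T u
    have hsumu : ∑ y ∈ T, |u y| ^ (1:ℝ) = 1 := by
      have h1 : ∀ y, |u y| ^ (1:ℝ) = u y := by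
        intro y
        rw [Real.rpow_one]
        refine abs_of_nonneg ?_
        rw [hudef]
        dsimp only
        split <;> norm_num
      rw [Finset.sum_congr rfl fun y _ => h1 y]
      rw [hudef]
      rw [Finset.sum_ite_eq' T x fun _ => (1:ℝ)]
      simp [hx]
    have havu : avNorm 1 T u = 1 / A := by
      rw [avNorm, hsumu]
      norm_num
      exact hAdef.symm
    have hZu : avNorm 1 B (Z u) ≤ c * (1 / A) := by
      have := hZ u
      rwa [havu] at this
    have hSu : avNorm q' B g ≤ c * γ * (c * (1 / A)) := by
      calc avNorm q' B g ≤ c * γ * avNorm 1 B (Z u) := hS (Z u)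
        _ ≤ c * γ * (c * (1 / A)) :=
          mul_le_mul_of_nonneg_left hZu (mul_nonneg hc0.le hγ.le)
    -- step 1: triangle inequality
    have step1 : |Sstar d R S Z h x| ≤ ∑ y ∈ T, |h y| * |g y| := by
      rw [Sstar]
      refine (Finset.abs_sum_le_sum_abs _ _).trans (le_of_eq ?_)
      exact Finset.sum_congr rfl fun y _ => abs_mul _ _
    -- step 2: Hölder
    have step2 : ∑ y ∈ T, |h y| * |g y|
        ≤ (∑ y ∈ T, |h y| ^ q) ^ (1/q) * (∑ y ∈ T, |g y| ^ q') ^ (1/q') :=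
      Real.inner_le_Lp_mul_Lq_of_nonneg T hconj (fun _ _ => abs_nonneg _)
        (fun _ _ => abs_nonneg _)
    have step3 : (∑ y ∈ T, |g y| ^ q') ≤ ∑ y ∈ B, |g y| ^ q' :=
      Finset.sum_le_sum_of_subset_of_nonneg hTB
        (fun _ _ _ => Real.rpow_nonneg (abs_nonneg _) _)
    have e1 : (∑ y ∈ T, |h y| ^ q) ^ (1/q) = A ^ (1/q) * N := by
      rw [hNdef, avNorm, ← Real.mul_rpow hT0.le (div_nonneg (Finset.sum_nonneg fun _ _ =>
        Real.rpow_nonneg (abs_nonneg _) _) hT0.le)]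
      congr 1
      field_simp
    have e2 : (∑ y ∈ B, |g y| ^ q') ^ (1/q') = Bc ^ (1/q') * avNorm q' B g := by
      rw [avNorm, ← Real.mul_rpow hB0.le (div_nonneg (Finset.sum_nonneg fun _ _ =>
        Real.rpow_nonneg (abs_nonneg _) _) hB0.le)]
      congr 1
      field_simp
    -- the card-ratio bound
    have hsum1 : A ^ (1/q) * A ^ (1/q') = A := by
      rw [← Real.rpow_add hT0, one_div, one_div, hconj.inv_add_inv_eq_one, Real.rpow_one]
    have key2 : A ^ (1/q) * Bc ^ (1/q') * A⁻¹ ≤ c := by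
      have heq : A ^ (1/q) * Bc ^ (1/q') * A⁻¹ = (Bc / A) ^ (1/q') := by
        rw [Real.div_rpow hB0.le hT0.le]
        rw [eq_div_iff (ne_of_gt (Real.rpow_pos_of_pos hT0 _))]
        calc A ^ (1/q) * Bc ^ (1/q') * A⁻¹ * A ^ (1/q')
            = Bc ^ (1/q') * ((A ^ (1/q) * A ^ (1/q')) * A⁻¹) := by ring
          _ = Bc ^ (1/q') := by rw [hsum1, mul_inv_cancel₀ (ne_of_gt hT0), mul_one]
      rw [heq]
      calc (Bc / A) ^ (1/q') ≤ c ^ (1/q') := by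
            refine Real.rpow_le_rpow (div_nonneg hB0.le hT0.le) ?_ (by positivity)
            rw [div_le_iff₀ hT0]
            exact hcard
        _ ≤ c ^ (1:ℝ) := Real.rpow_le_rpow_of_exponent_le hc
            (by rw [div_le_one hq'0]; linarith)
        _ = c := Real.rpow_one c
    calc |Sstar d R S Z h x|
        ≤ (∑ y ∈ T, |h y| ^ q) ^ (1/q) * (∑ y ∈ T, |g y| ^ q') ^ (1/q') :=
          step1.trans step2
      _ ≤ (A ^ (1/q) * N) * ((∑ y ∈ B, |g y| ^ q') ^ (1/q')) := by
          rw [e1]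
          refine mul_le_mul_of_nonneg_left ?_
            (mul_nonneg (Real.rpow_nonneg hT0.le _) hN0)
          exact Real.rpow_le_rpow (Finset.sum_nonneg fun _ _ =>
            Real.rpow_nonneg (abs_nonneg _) _) step3 (by positivity)
      _ = (A ^ (1/q) * N) * (Bc ^ (1/q') * avNorm q' B g) := by rw [e2]
      _ ≤ (A ^ (1/q) * N) * (Bc ^ (1/q') * (c * γ * (c * (1 / A)))) := by
          refine mul_le_mul_of_nonneg_left ?_
            (mul_nonneg (Real.rpow_nonneg hT0.le _) hN0)
          exact mul_le_mul_of_nonneg_left hSu (Real.rpow_nonneg hB0.le _)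
      _ = (A ^ (1/q) * Bc ^ (1/q') * A⁻¹) * (c * c * γ * N) := by ring
      _ ≤ c * (c * c * γ * N) := by
          refine mul_le_mul_of_nonneg_right key2 ?_
          exact mul_nonneg (mul_nonneg (mul_nonneg hc0.le hc0.le) hγ.le) hN0
      _ = c ^ 3 * γ * N := by ring
  rw [supNorm]
  exact Real.iSup_le (fun x => Real.iSup_le (fun hx => key x hx) hRHS) hRHS


end
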